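/- Let Ω₀ ⊂ ℝ² be a compact convex set with positive area, let r > 0, and let 0 < a ≤ 𝓛²(Ω₀). Then there exists a closed set Ω ⊆ Ω₀ with 𝓛²(Ω) = a minimizing 𝓛²(Ωʳ) among all closed subsets of Ω₀ of area a. -/

import Mathlib

open Metric MeasureTheory Set Filter
open scoped ENNReal Topology Real RealInnerProductSpace
noncomputable section
local notation "E2" => EuclideanSpace ℝ (Fin 2)

lemma trim_to_volume (K : Set E2) (hK : IsCompact K) (a : ℝ≥0∞) (ha : 0 < a)
    (haK : a ≤ volume K) : ∃ Ω : Set E2, IsClosed Ω ∧ Ω ⊆ K ∧ volume Ω = a := by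
  have hKne : K.Nonempty := by
    rcases K.eq_empty_or_nonempty with h | h
    · rw [h] at haK; simp at haK; exact absurd haK ha.ne'
    · exact h
  obtain ⟨x₀, hx₀⟩ := hKne
  obtain ⟨s₁', hs₁'⟩ := hK.isBounded.subset_closedBall x₀
  set s₁ : ℝ := max s₁' 0 with hs₁def
  have hs₁0 : 0 ≤ s₁ := le_max_right _ _
  have hKs₁ : K ⊆ closedBall x₀ s₁ :=
    hs₁'.trans (closedBall_subset_closedBall (le_max_left _ _))
  set f : ℝ → ℝ≥0∞ := fun s => volume (K ∩ closedBall x₀ s) with hf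
  have hKfin : volume K ≠ ∞ := hK.measure_lt_top.ne
  have hffin : ∀ s, f s ≠ ∞ := fun s =>
    ne_top_of_le_ne_top hKfin (measure_mono inter_subset_left)
  set c : ℝ → ℝ≥0∞ := fun s => volume (closedBall x₀ s) with hc
  have hcfin : ∀ s, c s ≠ ∞ := fun s => measure_closedBall_lt_top.ne
  have hccont : ContinuousOn c (Icc 0 s₁) := by
    have h1 : Continuous fun s : ℝ => ENNReal.ofReal (s ^ 2) * volume (ball (0:E2) 1) :=
      (ENNReal.continuous_mul_const measure_ball_lt_top.ne).comp
        (ENNReal.continuous_ofReal.comp (by continuity))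
    refine h1.continuousOn.congr fun s hs => ?_
    have := MeasureTheory.Measure.addHaar_closedBall (μ := (volume : Measure E2)) x₀ hs.1
    simpa [hc, finrank_euclideanSpace_fin] using this
  have hfcont : ContinuousOn f (Icc 0 s₁) := by
    intro s₀ hs₀
    have hcw : ContinuousWithinAt c (Icc 0 s₁) s₀ := hccont s₀ hs₀
    rw [ContinuousWithinAt, ENNReal.tendsto_nhds (hffin s₀)]
    intro ε hε
    have hce := (ENNReal.tendsto_nhds (hcfin s₀)).1 hcw ε hε
    filter_upwards [hce] with s hs
    have key : ∀ u v : ℝ, u ≤ v → f v ≤ f u + (c v - c u) := by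
      intro u v huv
      have hsub : K ∩ closedBall x₀ v ⊆ (K ∩ closedBall x₀ u) ∪ (closedBall x₀ v \ closedBall x₀ u) := by
        intro x hx
        by_cases hxu : x ∈ closedBall x₀ u
        · exact Or.inl ⟨hx.1, hxu⟩
        · exact Or.inr ⟨hx.2, hxu⟩
      calc f v ≤ volume ((K ∩ closedBall x₀ u) ∪ (closedBall x₀ v \ closedBall x₀ u)) :=
            measure_mono hsub
        _ ≤ f u + volume (closedBall x₀ v \ closedBall x₀ u) := measure_union_le _ _
        _ = f u + (c v - c u) := by
            rw [measure_diff (closedBall_subset_closedBall huv)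
              measurableSet_closedBall.nullMeasurableSet measure_closedBall_lt_top.ne]
    constructor
    · rcases le_total s s₀ with h | h
      · rw [tsub_le_iff_right]
        calc f s₀ ≤ f s + (c s₀ - c s) := key s s₀ h
          _ ≤ f s + ε := by
              gcongr
              exact tsub_le_iff_right.2 ((tsub_le_iff_right.1 hs.1).trans_eq (add_comm _ _))
      · exact le_trans tsub_le_self
          (measure_mono (inter_subset_inter_right _ (closedBall_subset_closedBall h)))
    · rcases le_total s s₀ with h | h
      · exact le_trans
          (measure_mono (inter_subset_inter_right _ (closedBall_subset_closedBall h)))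
          le_self_add
      · calc f s ≤ f s₀ + (c s - c s₀) := key s₀ s h
          _ ≤ f s₀ + ε := by gcongr; exact tsub_le_iff_left.2 hs.2
  have hmem : a ∈ Icc (f 0) (f s₁) := by
    constructor
    · have : f 0 = 0 := by
        refine le_antisymm ?_ zero_le
        calc f 0 ≤ volume ({x₀} : Set E2) := by
              refine measure_mono ?_
              rw [closedBall_zero]
              exact inter_subset_right
          _ = 0 := measure_singleton x₀
      rw [this]; exact zero_le
    · have : f s₁ = volume K := by rw [hf]; simp [inter_eq_self_of_subset_left hKs₁]
      rw [this]; exact haK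
  obtain ⟨s, _, hfs⟩ := intermediate_value_Icc hs₁0 hfcont hmem
  exact ⟨K ∩ closedBall x₀ s, hK.isClosed.inter Metric.isClosed_closedBall, inter_subset_left, hfs⟩

theorem exists_minimizer_one_step (Ω₀ : Set E2) (h0 : IsCompact Ω₀) (hc : Convex ℝ Ω₀)
    (hpos : 0 < volume Ω₀) (r : ℝ) (hr : 0 < r)
    (a : ℝ≥0∞) (ha : 0 < a) (ha2 : a ≤ volume Ω₀) :
    ∃ Ω : Set E2, IsClosed Ω ∧ Ω ⊆ Ω₀ ∧ volume Ω = a ∧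
      ∀ Ω' : Set E2, IsClosed Ω' → Ω' ⊆ Ω₀ → volume Ω' = a →
        volume (thickening r Ω) ≤ volume (thickening r Ω') := by
  classical
  set P : Set E2 → Prop := fun Ω' => IsClosed Ω' ∧ Ω' ⊆ Ω₀ ∧ volume Ω' = a with hP
  set m : ℝ≥0∞ := sInf ((fun Ω' => volume (thickening r Ω')) '' {Ω' | P Ω'}) with hm
  obtain ⟨Ω₁, hΩ₁cl, hΩ₁sub, hΩ₁vol⟩ := trim_to_volume Ω₀ h0 a ha ha2
  have hmle : m ≤ volume (thickening r Ω₁) := sInf_le ⟨Ω₁, ⟨hΩ₁cl, hΩ₁sub, hΩ₁vol⟩, rfl⟩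
  have hm_ne_top : m ≠ ∞ :=
    ne_top_of_le_ne_top (h0.isBounded.thickening.measure_lt_top.ne)
      (hmle.trans (measure_mono (thickening_subset_of_subset _ hΩ₁sub)))
  -- minimizing sequence
  have hseq : ∀ n : ℕ, ∃ Ω', P Ω' ∧ volume (thickening r Ω') < m + ((n : ℝ≥0∞) + 1)⁻¹ := by
    intro n
    have hlt : m < m + ((n : ℝ≥0∞) + 1)⁻¹ := by
      refine ENNReal.lt_add_right hm_ne_top ?_
      simp [ENNReal.add_eq_top]
    obtain ⟨x, ⟨Ω', hΩ', rfl⟩, hx⟩ := sInf_lt_iff.1 (hm ▸ hlt)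
    exact ⟨Ω', hΩ', hx⟩
  choose Ωs hPs hlt using hseq
  have hcl : ∀ n, IsClosed (Ωs n) := fun n => (hPs n).1
  have hsub : ∀ n, Ωs n ⊆ Ω₀ := fun n => (hPs n).2.1
  have hvol : ∀ n, volume (Ωs n) = a := fun n => (hPs n).2.2
  -- Blaschke selection inside the compact space ↥Ω₀
  haveI : CompactSpace ↥Ω₀ := isCompact_iff_compactSpace.1 h0
  have hKn : ∀ n : ℕ, IsCompact (Subtype.val ⁻¹' Ωs n : Set ↥Ω₀) := fun n =>
    ((hcl n).preimage continuous_subtype_val).isCompact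
  have hne : ∀ n : ℕ, (Subtype.val ⁻¹' Ωs n : Set ↥Ω₀).Nonempty := by
    intro n
    obtain ⟨x, hx⟩ := nonempty_of_measure_ne_zero ((hvol n).trans_ne ha.ne' :
      volume (Ωs n) ≠ 0)
    exact ⟨⟨x, hsub n hx⟩, hx⟩
  set Kn : ℕ → TopologicalSpace.NonemptyCompacts ↥Ω₀ := fun n => ⟨⟨_, hKn n⟩, hne n⟩ with hKndef
  obtain ⟨L, -, φ, hφ, hconv⟩ := isCompact_univ.tendsto_subseq (fun n => Set.mem_univ (Kn n))
  set Oinf : Set E2 := Subtype.val '' (L : Set ↥Ω₀) with hOinfdef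
  have hOinfcomp : IsCompact Oinf := L.isCompact.image continuous_subtype_val
  have hOinfclosed : IsClosed Oinf := hOinfcomp.isClosed
  have hOinfsub : Oinf ⊆ Ω₀ := by
    rintro x ⟨y, -, rfl⟩; exact y.2
  have hKval : ∀ n, Subtype.val '' ((Kn n : Set ↥Ω₀)) = Ωs n := by
    intro n
    rw [hKndef]
    simp only [TopologicalSpace.NonemptyCompacts.coe_mk, TopologicalSpace.Compacts.coe_mk]
    rw [Subtype.image_preimage_coe]
    exact inter_eq_self_of_subset_right (hsub n)
  have key : ∀ δ : ℝ, 0 < δ →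
      ∀ᶠ k in atTop, EMetric.hausdorffEdist (Ωs (φ k)) Oinf < ENNReal.ofReal δ := by
    intro δ hδ
    have h2 := (EMetric.tendsto_nhds.1 hconv) (ENNReal.ofReal δ) (ENNReal.ofReal_pos.2 hδ)
    filter_upwards [h2] with k hk
    simp only [Function.comp] at hk
    have heq : edist (Kn (φ k)) L = EMetric.hausdorffEdist (Ωs (φ k)) Oinf := by
      show EMetric.hausdorffEdist ((Kn (φ k) : Set ↥Ω₀)) (L : Set ↥Ω₀) = _
      rw [← hKval (φ k), hOinfdef]; exact (Metric.hausdorffEDist_image isometry_subtype_coe).symm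
    rwa [heq] at hk
  have hsubA : ∀ δ : ℝ, 0 < δ → ∀ᶠ k in atTop, Ωs (φ k) ⊆ thickening δ Oinf := by
    intro δ hδ
    filter_upwards [key δ hδ] with k hk x hx
    rw [mem_thickening_iff_infEdist_lt]
    exact lt_of_le_of_lt (EMetric.infEdist_le_hausdorffEdist_of_mem hx) hk
  have hsubB : ∀ δ : ℝ, 0 < δ → ∀ᶠ k in atTop, Oinf ⊆ thickening δ (Ωs (φ k)) := by
    intro δ hδ
    filter_upwards [key δ hδ] with k hk x hx
    rw [mem_thickening_iff_infEdist_lt]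
    refine lt_of_le_of_lt (EMetric.infEdist_le_hausdorffEdist_of_mem hx) ?_
    rwa [EMetric.hausdorffEdist_comm]
  -- volume Oinf ≥ a
  have hvolOinf : a ≤ volume Oinf := by
    have h1 : ∀ δ : ℝ, 0 < δ → a ≤ volume (cthickening δ Oinf) := by
      intro δ hδ
      obtain ⟨k, hk⟩ := (hsubA δ hδ).exists
      calc a = volume (Ωs (φ k)) := (hvol _).symm
        _ ≤ volume (thickening δ Oinf) := measure_mono hk
        _ ≤ _ := measure_mono (thickening_subset_cthickening δ _)
    have h2 := tendsto_measure_cthickening_of_isClosed (μ := volume) (s := Oinf)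
      ⟨1, one_pos, ((h0.isBounded.subset hOinfsub).cthickening).measure_lt_top.ne⟩ hOinfclosed
    refine ge_of_tendsto (h2.mono_left (nhdsWithin_le_nhds : 𝓝[>] (0:ℝ) ≤ 𝓝 0)) ?_
    filter_upwards [self_mem_nhdsWithin] with δ (hδ : (0:ℝ) < δ)
    exact h1 δ hδ
  -- volume (thickening (r - δ) Oinf) ≤ m
  have hB : ∀ δ : ℝ, 0 < δ → volume (thickening (r - δ) Oinf) ≤ m := by
    intro δ hδ
    refine ENNReal.le_of_forall_pos_le_add fun ε hε _ => ?_
    obtain ⟨n, hn⟩ := ENNReal.exists_inv_nat_lt (show ((ε : ℝ≥0∞)) ≠ 0 by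
      exact_mod_cast hε.ne')
    obtain ⟨k, hk1, hk2⟩ := ((eventually_ge_atTop n).and (hsubB δ hδ)).exists
    have hφk : (n : ℝ≥0∞) ≤ (φ k : ℝ≥0∞) + 1 := by
      have : n ≤ φ k + 1 := le_trans (hk1.trans hφ.le_apply) (Nat.le_succ _)
      exact_mod_cast this
    calc volume (thickening (r - δ) Oinf)
        ≤ volume (thickening (r - δ) (thickening δ (Ωs (φ k)))) :=
          measure_mono (thickening_subset_of_subset _ hk2)
      _ ≤ volume (thickening ((r - δ) + δ) (Ωs (φ k))) :=
          measure_mono (thickening_thickening_subset _ _ _)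
      _ = volume (thickening r (Ωs (φ k))) := by ring_nf
      _ ≤ m + ((φ k : ℝ≥0∞) + 1)⁻¹ := (hlt _).le
      _ ≤ m + ε := by
          gcongr
          exact le_trans (ENNReal.inv_le_inv.2 hφk) hn.le
  -- volume (thickening r Oinf) ≤ m
  have hC : volume (thickening r Oinf) ≤ m := by
    set g : ℕ → Set E2 := fun n => thickening (r - r / (n + 2)) Oinf with hg
    have hmono : Monotone g := by
      intro i j hij
      refine thickening_mono ?_ Oinf
      have : r / ((j : ℝ) + 2) ≤ r / ((i : ℝ) + 2) :=
        div_le_div_of_nonneg_left hr.le (by positivity)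
          (by exact_mod_cast Nat.add_le_add_right hij 2)
      linarith
    have hunion : thickening r Oinf = ⋃ n, g n := by
      apply Subset.antisymm
      · intro x hx
        obtain ⟨z, hz, hdist⟩ := mem_thickening_iff.1 hx
        have hpos' : 0 < r - dist x z := sub_pos.2 hdist
        obtain ⟨n, hn⟩ := exists_nat_gt (r / (r - dist x z))
        have hlt' : r / ((n : ℝ) + 2) < r - dist x z := by
          rw [div_lt_iff₀ (by positivity)]
          rw [div_lt_iff₀ hpos'] at hn
          nlinarith
        exact mem_iUnion.2 ⟨n, mem_thickening_iff.2 ⟨z, hz, by linarith⟩⟩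
      · exact iUnion_subset fun n =>
          thickening_mono (sub_le_self _ (by positivity)) Oinf
    rw [hunion, hmono.directed_le.measure_iUnion]
    refine iSup_le fun n => hB (r / (n + 2)) (by positivity)
  -- trim and conclude
  obtain ⟨Ω, hΩcl, hΩsub, hΩvol⟩ := trim_to_volume Oinf hOinfcomp a ha hvolOinf
  refine ⟨Ω, hΩcl, hΩsub.trans hOinfsub, hΩvol, fun Ω' h1 h2 h3 => ?_⟩
  calc volume (thickening r Ω) ≤ volume (thickening r Oinf) :=
        measure_mono (thickening_subset_of_subset _ hΩsub)
    _ ≤ m := hC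
    _ ≤ volume (thickening r Ω') := sInf_le ⟨Ω', ⟨h1, h2, h3⟩, rfl⟩
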